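/- Let V be a vertex algebra and M a subspace containing C₂(V) such that M/C₂(V) is an ideal of the commutative associative algebra V/C₂(V). Then M is a Mathieu-Zhao subspace of V with respect to the 0-th and (-1)-th products. -/

import Mathlib

open scoped BigOperators

noncomputable section

/-- The generalized binomial coefficient `p choose i` for `p : ℤ`, as a complex number. -/
def zchoose (p : ℤ) (i : ℕ) : ℂ :=
  (∏ j ∈ Finset.range i, ((p : ℂ) - (j : ℂ))) / (i.factorial : ℂ)

/-- A vertex algebra over `ℂ`: a bilinear system of modes `u ↦ u_n`, a vacuum vector `𝟙`,
truncation, vacuum/creation axioms and the Borcherds (Jacobi) identity. -/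
structure VertexAlgebra (V : Type) [AddCommGroup V] [Module ℂ V] where
  mode : V → ℤ → V → V
  one : V
  mode_add_left : ∀ (u v : V) (n : ℤ) (w : V), mode (u + v) n w = mode u n w + mode v n w
  mode_smul_left : ∀ (c : ℂ) (u : V) (n : ℤ) (w : V), mode (c • u) n w = c • mode u n w
  mode_add_right : ∀ (u : V) (n : ℤ) (v w : V), mode u n (v + w) = mode u n v + mode u n w
  mode_smul_right : ∀ (u : V) (n : ℤ) (c : ℂ) (v : V), mode u n (c • v) = c • mode u n v
  trunc : ∀ u v : V, ∃ N : ℤ, ∀ n ≥ N, mode u n v = 0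
  vacuum_left : ∀ (n : ℤ) (v : V), mode one n v = if n = -1 then v else 0
  creation_nonneg : ∀ (u : V) (n : ℤ), 0 ≤ n → mode u n one = 0
  creation : ∀ u : V, mode u (-1) one = u
  borcherds : ∀ (u v w : V) (p q r : ℤ),
    ∑ᶠ i : ℕ, zchoose p i • mode (mode u (r + i) v) (p + q - i) w =
      ∑ᶠ i : ℕ, ((-1 : ℂ) ^ i * zchoose r i) •
        (mode u (p + r - i) (mode v (q + i) w) -
          ((-1 : ℂ) ^ r) • mode v (q + r - i) (mode u (p + i) w))

/-- A list of mode indices all equal to `0` or `-1`. -/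
def GoodIdx (ns : List ℤ) : Prop := ∀ n ∈ ns, n = 0 ∨ n = -1

namespace VertexAlgebra

variable {V : Type} [AddCommGroup V] [Module ℂ V] (VA : VertexAlgebra V)

/-- The translation operator `𝒟 v = v_{-2} 𝟙`. -/
def D (v : V) : V := VA.mode v (-2) VA.one

/-- `C₂(V) = span_ℂ { u_{-2} v }`. -/
def C2 : Submodule ℂ V := Submodule.span ℂ {w : V | ∃ u v : V, w = VA.mode u (-2) v}

/-- `Cₙ(V) = span_ℂ { u_{-n} v }`. -/
def Cn (n : ℕ) : Submodule ℂ V :=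
  Submodule.span ℂ {w : V | ∃ u v : V, w = VA.mode u (-(n : ℤ)) v}


/-- The iterated word `a_{n₁} a_{n₂} ⋯ a_{n_t} a`. -/
def word (a : V) (ns : List ℤ) : V := ns.foldr (fun n acc => VA.mode a n acc) a

/-- The radical `r_{0,-1}(M)` of a subspace `M` with respect to the 0-th and (-1)-th products. -/
def rad (M : Set V) : Set V :=
  {v : V | ∃ m : ℕ, ∀ ns : List ℤ, GoodIdx ns → m ≤ ns.length → VA.word v ns ∈ M}

/-- The left-strong radical `lsr_{0,-1}(M)`. -/
def lsrad (M : Set V) : Set V :=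
  {v : V | ∀ b : V, ∃ m : ℕ, ∀ (ns : List ℤ) (s : ℤ), GoodIdx ns → m ≤ ns.length →
    (s = 0 ∨ s = -1) → VA.mode b s (VA.word v ns) ∈ M}

/-- The right-strong radical `rsr_{0,-1}(M)`. -/
def rsrad (M : Set V) : Set V :=
  {v : V | ∀ w : V, ∃ m : ℕ, ∀ (ns : List ℤ) (s : ℤ), GoodIdx ns → m ≤ ns.length →
    (s = 0 ∨ s = -1) → VA.mode (VA.word v ns) s w ∈ M}

/-- The strong radical `sr_{0,-1}(M) = lsr_{0,-1}(M) ∩ rsr_{0,-1}(M)`. -/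
def srad (M : Set V) : Set V := VA.lsrad M ∩ VA.rsrad M

/-- `M` is a Mathieu-Zhao subspace of `V` with respect to the 0-th and (-1)-th products. -/
def IsMZ (M : Set V) : Prop := VA.rad M = VA.srad M

/-- A (two-sided) ideal of a vertex algebra. -/
def IsIdeal (I : Submodule ℂ V) : Prop :=
  ∀ (v w : V) (n : ℤ), w ∈ I → VA.mode v n w ∈ I ∧ VA.mode w n v ∈ I

/-- `t`-th power of `a` under the (-1)-th product: `a_{-1}(a_{-1}(⋯ a))`, with `pow a 0 = 𝟙`. -/
def pow (a : V) (t : ℕ) : V :=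
  Nat.rec VA.one (fun _ acc => VA.mode a (-1) acc) t

end VertexAlgebra

/-- A homomorphism of vertex algebras: a linear map preserving all modes and the vacuum. -/
def VertexAlgebra.IsHom {V W : Type} [AddCommGroup V] [Module ℂ V] [AddCommGroup W]
    [Module ℂ W] (VA : VertexAlgebra V) (WA : VertexAlgebra W) (f : V →ₗ[ℂ] W) : Prop :=
  f VA.one = WA.one ∧ ∀ (u v : V) (n : ℤ), f (VA.mode u n v) = WA.mode (f u) n (f v)

/-- A vertex operator algebra: a `ℤ`-graded vertex algebra with finite-dimensional
pieces, grading bounded below, and a conformal vector `ω` whose modes `L(n) = ω_{n+1}`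
satisfy the Virasoro relations, give the grading by `L(0)`, and realize `L(-1) = 𝒟`. -/
structure VertexOperatorAlgebra (V : Type) [AddCommGroup V] [Module ℂ V]
    extends VertexAlgebra V where
  grade : ℤ → Submodule ℂ V
  internal : DirectSum.IsInternal grade
  one_mem : one ∈ grade 0
  mode_grade : ∀ {k m n : ℤ} {u w : V}, u ∈ grade k → w ∈ grade n →
    mode u m w ∈ grade (k + n - m - 1)
  fin_dim : ∀ n : ℤ, FiniteDimensional ℂ (grade n)
  bounded_below : ∃ n₀ : ℤ, ∀ n < n₀, grade n = ⊥
  omega : V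
  omega_mem : omega ∈ grade 2
  central_charge : ℂ
  virasoro : ∀ (m n : ℤ) (v : V),
    mode omega (m + 1) (mode omega (n + 1) v) - mode omega (n + 1) (mode omega (m + 1) v) =
      ((m : ℂ) - (n : ℂ)) • mode omega (m + n + 1) v +
        (if m + n = 0 then (((m : ℂ) ^ 3 - (m : ℂ)) / 12) * central_charge else 0) • v
  L0_grading : ∀ (n : ℤ) (v : V), v ∈ grade n → mode omega 1 v = (n : ℂ) • v
  L_neg1 : ∀ v : V, mode omega 0 v = mode v (-2) one

/-! ### Auxiliary lemmas for stmt14 -/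

section FinsumAux

variable {W : Type*} [AddCommGroup W] [Module ℂ W]

lemma finsum_mem_submodule (p : Submodule ℂ W) {g : ℕ → W} (h : ∀ i, g i ∈ p) :
    (∑ᶠ i, g i) ∈ p := by
  by_cases hf : (Function.support g).Finite
  · rw [finsum_eq_sum g hf]
    exact Submodule.sum_mem _ fun i _ => h i
  · rw [finsum_of_infinite_support hf]
    exact p.zero_mem

lemma finsum_sub_head_mem (p : Submodule ℂ W) {g : ℕ → W}
    (hfin : (Function.support g).Finite) (h : ∀ i, i ≠ 0 → g i ∈ p) :
    (∑ᶠ i, g i) - g 0 ∈ p := by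
  have hdecomp : g = (fun i => if i = 0 then g 0 else 0) + fun i => if i = 0 then 0 else g i := by
    funext i
    by_cases hi : i = 0 <;> simp [hi]
  have h1 : (Function.support fun i : ℕ => if i = 0 then g 0 else 0).Finite := by
    apply (Set.finite_singleton (0 : ℕ)).subset
    intro i hi
    by_contra hne
    simp only [Function.mem_support] at hi
    exact hi (if_neg hne)
  have h2 : (Function.support fun i : ℕ => if i = 0 then 0 else g i).Finite := by
    apply hfin.subset
    intro i hi
    simp only [Function.mem_support] at hi ⊢
    intro hgi
    apply hi
    split <;> simp [hgi]
  have e1 : (∑ᶠ i : ℕ, (if i = 0 then g 0 else 0)) = g 0 := by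
    rw [finsum_eq_single _ 0 (fun x hx => if_neg hx)]
    simp
  have key : (∑ᶠ i, g i) = g 0 + ∑ᶠ i : ℕ, (if i = 0 then 0 else g i) := by
    conv_lhs => rw [hdecomp]
    rw [show ((fun i : ℕ => if i = 0 then g 0 else 0) + fun i : ℕ => if i = 0 then 0 else g i)
      = fun i : ℕ => (if i = 0 then g 0 else 0) + (if i = 0 then 0 else g i) from rfl]
    rw [finsum_add_distrib h1 h2, e1]
  rw [key]
  have : (∑ᶠ i : ℕ, (if i = 0 then 0 else g i)) ∈ p := by
    apply finsum_mem_submodule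
    intro i
    by_cases hi : i = 0
    · simp [hi]
    · simpa [hi] using h i hi
  simpa using this

end FinsumAux

section ZchooseAux

lemma zchoose_zero_right' (p : ℤ) : zchoose p 0 = 1 := by simp [zchoose]

lemma zchoose_zero_of_pos (i : ℕ) (hi : i ≠ 0) : zchoose 0 i = 0 := by
  unfold zchoose
  rw [Finset.prod_eq_zero (Finset.mem_range.mpr (Nat.pos_of_ne_zero hi)) (by simp)]
  simp

lemma prod_neg_one_aux (i : ℕ) :
    (∏ j ∈ Finset.range i, ((-1 : ℂ) - (j : ℂ))) = (-1) ^ i * (i.factorial : ℂ) := by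
  induction i with
  | zero => simp
  | succ n ih =>
    rw [Finset.prod_range_succ, ih, Nat.factorial_succ]
    push_cast
    ring

lemma prod_neg_two_aux (i : ℕ) :
    (∏ j ∈ Finset.range i, ((-2 : ℂ) - (j : ℂ))) = (-1) ^ i * ((i + 1).factorial : ℂ) := by
  induction i with
  | zero => simp
  | succ n ih =>
    rw [Finset.prod_range_succ, ih, Nat.factorial_succ (n + 1)]
    push_cast
    ring

lemma zchoose_neg_one (i : ℕ) : zchoose (-1) i = (-1) ^ i := by
  have hne : (i.factorial : ℂ) ≠ 0 := Nat.cast_ne_zero.mpr i.factorial_ne_zero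
  unfold zchoose
  push_cast
  rw [prod_neg_one_aux, mul_div_assoc, div_self hne, mul_one]

lemma zchoose_neg_two (i : ℕ) : zchoose (-2) i = (-1) ^ i * ((i : ℂ) + 1) := by
  have hne : (i.factorial : ℂ) ≠ 0 := Nat.cast_ne_zero.mpr i.factorial_ne_zero
  unfold zchoose
  push_cast
  rw [prod_neg_two_aux, Nat.factorial_succ]
  push_cast
  field_simp

end ZchooseAux
namespace VertexAlgebra

variable {V : Type} [AddCommGroup V] [Module ℂ V] (VA : VertexAlgebra V)

lemma mode_zero_right (u : V) (n : ℤ) : VA.mode u n 0 = 0 := by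
  simpa using VA.mode_smul_right u n 0 0

lemma mode_zero_left (n : ℤ) (w : V) : VA.mode 0 n w = 0 := by
  simpa using VA.mode_smul_left 0 0 n w

lemma mode_sub_left (u v : V) (n : ℤ) (w : V) :
    VA.mode (u - v) n w = VA.mode u n w - VA.mode v n w := by
  have h2 : VA.mode (-v) n w = -VA.mode v n w := by
    simpa [neg_one_smul] using VA.mode_smul_left (-1) v n w
  rw [sub_eq_add_neg, VA.mode_add_left, h2, sub_eq_add_neg]

lemma mode_sub_right (u : V) (n : ℤ) (v w : V) :
    VA.mode u n (v - w) = VA.mode u n v - VA.mode u n w := by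
  have h2 : VA.mode u n (-w) = -VA.mode u n w := by
    simpa [neg_one_smul] using VA.mode_smul_right u n (-1) w
  rw [sub_eq_add_neg, VA.mode_add_right, h2, sub_eq_add_neg]

/-- Exact commutator formula for the 0-th mode. -/
lemma comm0 (u v w : V) (q : ℤ) :
    VA.mode (VA.mode u 0 v) q w
      = VA.mode u 0 (VA.mode v q w) - VA.mode v q (VA.mode u 0 w) := by
  have hb := VA.borcherds u v w 0 q 0
  rw [finsum_eq_single _ 0 (fun i hi => by simp [zchoose_zero_of_pos i hi]),
      finsum_eq_single _ 0 (fun i hi => by simp [zchoose_zero_of_pos i hi])] at hb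
  simpa [zchoose_zero_right'] using hb

/-- `(u₋₂𝟙)_q w = (-q) • u_{q-1} w` for `q ≤ -2`. -/
lemma Dmode (u w : V) (q : ℤ) (hq : q ≤ -2) :
    VA.mode (VA.mode u (-2) VA.one) q w = (-q : ℂ) • VA.mode u (q - 1) w := by
  have hb := VA.borcherds u VA.one w 0 q (-2)
  rw [finsum_eq_single _ 0 (fun i hi => by simp [zchoose_zero_of_pos i hi])] at hb
  rw [finsum_eq_single _ (-1 - q).toNat ?_] at hb
  · have hcast : (((-1 - q).toNat : ℤ)) = -1 - q := Int.toNat_of_nonneg (by omega)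
    have hv1 : VA.mode VA.one (q + ((-1 - q).toNat : ℤ)) w = w := by
      rw [VA.vacuum_left]
      rw [if_pos (by omega)]
    have hv2 : VA.mode VA.one (q + -2 - ((-1 - q).toNat : ℤ))
        (VA.mode u (0 + ((-1 - q).toNat : ℤ)) w) = 0 := by
      rw [VA.vacuum_left, if_neg (by omega)]
    rw [hv1, hv2, smul_zero, sub_zero] at hb
    have hidx : (0 : ℤ) + -2 - ((-1 - q).toNat : ℤ) = q - 1 := by omega
    rw [hidx] at hb
    have hco : ((-1 : ℂ) ^ (-1 - q).toNat * zchoose (-2) (-1 - q).toNat) = (-q : ℂ) := by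
      rw [zchoose_neg_two, ← mul_assoc, ← mul_pow]
      have : (((-1 - q).toNat : ℂ)) = -1 - (q : ℂ) := by
        rw [show (((-1 - q).toNat : ℂ)) = (((-1 - q).toNat : ℤ) : ℂ) by push_cast; ring, hcast]
        push_cast; ring
      rw [this]
      norm_num
      ring
    rw [hco] at hb
    simpa [zchoose_zero_right'] using hb
  · intro i hi
    have hv1 : VA.mode VA.one (q + (i : ℤ)) w = 0 := by
      rw [VA.vacuum_left, if_neg ?_]
      intro hcon
      apply hi
      omega
    have hv2 : VA.mode VA.one (q + -2 - (i : ℤ)) (VA.mode u (0 + (i : ℤ)) w) = 0 := by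
      rw [VA.vacuum_left, if_neg (by omega)]
    rw [hv1, hv2, VA.mode_zero_right, smul_zero, sub_zero, smul_zero]

/-- Deep modes land in `C₂`. -/
lemma deep_mem : ∀ (k : ℕ) (u w : V), VA.mode u (-2 - (k : ℤ)) w ∈ VA.C2 := by
  intro k
  induction k with
  | zero =>
    intro u w
    exact Submodule.subset_span ⟨u, w, by norm_num⟩
  | succ n ih =>
    intro u w
    set q : ℤ := -2 - (n : ℤ) with hqdef
    have hD := VA.Dmode u w q (by omega)
    have hne : (-(q : ℂ)) ≠ 0 := by
      have : ((q : ℤ) : ℂ) ≠ 0 := Int.cast_ne_zero.mpr (by omega)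
      simpa using this
    have h2 : VA.mode u (q - 1) w = (-(q : ℂ))⁻¹ • VA.mode (VA.mode u (-2) VA.one) q w := by
      rw [hD, smul_smul, inv_mul_cancel₀ hne, one_smul]
    have hidx : (-2 - ((n + 1 : ℕ) : ℤ)) = q - 1 := by
      rw [hqdef]; push_cast; ring
    rw [hidx, h2]
    exact Submodule.smul_mem _ _ (ih _ w)

lemma mode_le_mem (u w : V) (n : ℤ) (hn : n ≤ -2) : VA.mode u n w ∈ VA.C2 := by
  have h : n = -2 - ((-2 - n).toNat : ℤ) := by
    rw [Int.toNat_of_nonneg (by omega)]; ring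
  rw [h]
  exact VA.deep_mem _ u w

/-- `C₂` is a right ideal for modes with index `≤ 0`. -/
lemma C2_mode_left_mem (w : V) (q : ℤ) (hq : q ≤ 0) {x : V} (hx : x ∈ VA.C2) :
    VA.mode x q w ∈ VA.C2 := by
  induction hx using Submodule.span_induction with
  | mem x hxs =>
    obtain ⟨a, b, rfl⟩ := hxs
    have hb := VA.borcherds a b w 0 q (-2)
    rw [finsum_eq_single _ 0 (fun i hi => by simp [zchoose_zero_of_pos i hi])] at hb
    have : VA.mode (VA.mode a (-2) b) q w
        = zchoose 0 0 • VA.mode (VA.mode a (-2 + (0:ℕ)) b) (0 + q - (0:ℕ)) w := by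
      simp [zchoose_zero_right']
    rw [this, hb]
    apply finsum_mem_submodule
    intro i
    apply Submodule.smul_mem
    apply Submodule.sub_mem
    · exact VA.mode_le_mem _ _ _ (by omega)
    · exact Submodule.smul_mem _ _ (VA.mode_le_mem _ _ _ (by omega))
  | zero => rw [VA.mode_zero_left]; exact Submodule.zero_mem _
  | add x y hx hy ihx ihy => rw [VA.mode_add_left]; exact Submodule.add_mem _ ihx ihy
  | smul c x hx ihx => rw [VA.mode_smul_left]; exact Submodule.smul_mem _ _ ihx

/-- Skew-symmetry modulo `C₂` for `r = 0` or `r = 1`. -/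
lemma skew_mem (u v : V) (r : ℤ) :
    VA.mode u (r - 1) v - ((-1 : ℂ) ^ r) • VA.mode v (r - 1) u ∈ VA.C2 := by
  have hb := VA.borcherds u v VA.one (-1) (-1) r
  have hzero : ∀ i : ℕ, i ≠ 0 → ((-1 : ℂ) ^ i * zchoose r i) •
      (VA.mode u (-1 + r - (i : ℤ)) (VA.mode v (-1 + (i : ℤ)) VA.one) -
        ((-1 : ℂ) ^ r) • VA.mode v (-1 + r - (i : ℤ)) (VA.mode u (-1 + (i : ℤ)) VA.one)) = 0 := by
    intro i hi
    rw [VA.creation_nonneg v _ (by omega), VA.creation_nonneg u _ (by omega),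
      VA.mode_zero_right, VA.mode_zero_right, smul_zero, sub_zero, smul_zero]
  rw [finsum_eq_single _ 0 hzero] at hb
  have hmem : (∑ᶠ i : ℕ, zchoose (-1) i •
      VA.mode (VA.mode u (r + (i : ℤ)) v) (-1 + -1 - (i : ℤ)) VA.one) ∈ VA.C2 :=
    finsum_mem_submodule _ fun i =>
      Submodule.smul_mem _ _ (VA.mode_le_mem _ _ _ (by omega))
  rw [hb] at hmem
  simpa [zchoose_zero_right', VA.creation,
    show (-1 : ℤ) + r = r - 1 from by ring] using hmem

lemma comm_neg1_mem (u v : V) : VA.mode u (-1) v - VA.mode v (-1) u ∈ VA.C2 := by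
  have := VA.skew_mem u v 0
  norm_num at this
  exact this

lemma anticomm0_mem (u v : V) : VA.mode u 0 v + VA.mode v 0 u ∈ VA.C2 := by
  have := VA.skew_mem u v 1
  norm_num [sub_neg_eq_add] at this
  exact this

lemma self0_mem (v : V) : VA.mode v 0 v ∈ VA.C2 := by
  have h := VA.anticomm0_mem v v
  have heq : VA.mode v 0 v = (2⁻¹ : ℂ) • (VA.mode v 0 v + VA.mode v 0 v) := by
    rw [← two_smul ℂ, smul_smul]
    norm_num
  rw [heq]
  exact Submodule.smul_mem _ _ h

/-- `C₂` is a left ideal for modes `0` and `-1`. -/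
lemma mode_C2_mem (u : V) {x : V} (hx : x ∈ VA.C2) (q : ℤ) (hq : q = 0 ∨ q = -1) :
    VA.mode u q x ∈ VA.C2 := by
  rcases hq with rfl | rfl
  · have h1 := VA.anticomm0_mem u x
    have h2 := VA.C2_mode_left_mem u 0 (by omega) hx
    have : VA.mode u 0 x = (VA.mode u 0 x + VA.mode x 0 u) - VA.mode x 0 u := by abel
    rw [this]
    exact Submodule.sub_mem _ h1 h2
  · have h1 := VA.comm_neg1_mem u x
    have h2 := VA.C2_mode_left_mem u (-1) (by omega) hx
    have : VA.mode u (-1) x = (VA.mode u (-1) x - VA.mode x (-1) u) + VA.mode x (-1) u := by abel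
    rw [this]
    exact Submodule.add_mem _ h1 h2

/-- Quasi-associativity modulo `C₂`. -/
lemma qassoc (u x y : V) :
    VA.mode (VA.mode u (-1) x) (-1) y - VA.mode u (-1) (VA.mode x (-1) y) ∈ VA.C2 := by
  have hb := VA.borcherds u x y 0 (-1) (-1)
  rw [finsum_eq_single _ 0 (fun i hi => by simp [zchoose_zero_of_pos i hi])] at hb
  set g : ℕ → V := fun i => ((-1 : ℂ) ^ i * zchoose (-1) i) •
      (VA.mode u (0 + -1 - (i : ℤ)) (VA.mode x (-1 + (i : ℤ)) y) -
        ((-1 : ℂ) ^ (-1 : ℤ)) • VA.mode x (-1 + -1 - (i : ℤ)) (VA.mode u (0 + (i : ℤ)) y)) with hg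
  obtain ⟨N1, hN1⟩ := VA.trunc x y
  obtain ⟨N2, hN2⟩ := VA.trunc u y
  have hfin : (Function.support g).Finite := by
    apply (Set.finite_Iio ((N1 + 1).toNat + N2.toNat + 1)).subset
    intro i hi
    rw [Set.mem_Iio]
    by_contra hK
    push_neg at hK
    apply hi
    have e1 : VA.mode x (-1 + (i : ℤ)) y = 0 := hN1 _ (by omega)
    have e2 : VA.mode u (0 + (i : ℤ)) y = 0 := hN2 _ (by omega)
    simp only [hg, e1, e2, VA.mode_zero_right, smul_zero, sub_zero, zero_sub, neg_zero]
  have hsub := finsum_sub_head_mem VA.C2 hfin ?_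
  · have hg0 : g 0 = VA.mode u (-1) (VA.mode x (-1) y)
        + VA.mode x (-2) (VA.mode u 0 y) := by
      have h1 : ((-1 : ℂ)) ^ (-1 : ℤ) = -1 := by norm_num
      simp only [hg, Nat.cast_zero, pow_zero, zchoose_zero_right', one_mul, one_smul, h1]
      norm_num
    have hbg : VA.mode (VA.mode u (-1) x) (-1) y = ∑ᶠ i, g i := by
      rw [← hb]
      norm_num [zchoose_zero_right']
    rw [hg0] at hsub
    rw [← hbg] at hsub
    have hx2 : VA.mode x (-2) (VA.mode u 0 y) ∈ VA.C2 :=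
      Submodule.subset_span ⟨x, _, rfl⟩
    have := Submodule.add_mem _ hsub hx2
    convert this using 1
    abel
  · intro i hi
    apply Submodule.smul_mem
    apply Submodule.sub_mem
    · exact VA.mode_le_mem _ _ _ (by omega)
    · exact Submodule.smul_mem _ _ (VA.mode_le_mem _ _ _ (by omega))

/-- Products with index `-1` commute modulo `C₂` under nesting. -/
lemma swap_mem (u x y : V) :
    VA.mode u (-1) (VA.mode x (-1) y) - VA.mode x (-1) (VA.mode u (-1) y) ∈ VA.C2 := by
  have h1 := VA.qassoc u x y
  have h2 : VA.mode (VA.mode u (-1) x - VA.mode x (-1) u) (-1) y ∈ VA.C2 :=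
    VA.C2_mode_left_mem y (-1) (by omega) (VA.comm_neg1_mem u x)
  rw [VA.mode_sub_left] at h2
  have h3 := VA.qassoc x u y
  have := Submodule.sub_mem _ (Submodule.add_mem _ h2 h3) h1
  convert this using 1
  abel

@[simp] lemma pow_zero' (v : V) : VA.pow v 0 = VA.one := rfl

lemma pow_succ' (v : V) (k : ℕ) : VA.pow v (k + 1) = VA.mode v (-1) (VA.pow v k) := rfl

/-- Derivation formula: `b₀(v^{k+1}) ≡ (k+1) • (b₀v)₋₁ v^k` modulo `C₂`. -/
lemma deriv_pow (b v : V) : ∀ k : ℕ,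
    VA.mode b 0 (VA.pow v (k + 1))
      - ((k : ℂ) + 1) • VA.mode (VA.mode b 0 v) (-1) (VA.pow v k) ∈ VA.C2 := by
  intro k
  induction k with
  | zero =>
    have h1 : VA.pow v 1 = v := by rw [VA.pow_succ', VA.pow_zero', VA.creation]
    rw [h1, VA.pow_zero', VA.creation]
    norm_num
  | succ k ih =>
    have hco : VA.mode b 0 (VA.pow v (k + 2))
        = VA.mode (VA.mode b 0 v) (-1) (VA.pow v (k + 1))
          + VA.mode v (-1) (VA.mode b 0 (VA.pow v (k + 1))) := by
      rw [VA.pow_succ' v (k + 1), VA.comm0 b v (VA.pow v (k+1)) (-1)]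
      abel
    have t1 : VA.mode v (-1) (VA.mode b 0 (VA.pow v (k + 1))
        - ((k : ℂ) + 1) • VA.mode (VA.mode b 0 v) (-1) (VA.pow v k)) ∈ VA.C2 :=
      VA.mode_C2_mem v ih (-1) (Or.inr rfl)
    rw [VA.mode_sub_right, VA.mode_smul_right] at t1
    have t2 : (((k : ℂ) + 1)) • (VA.mode v (-1) (VA.mode (VA.mode b 0 v) (-1) (VA.pow v k))
        - VA.mode (VA.mode b 0 v) (-1) (VA.mode v (-1) (VA.pow v k))) ∈ VA.C2 :=
      Submodule.smul_mem _ _ (VA.swap_mem v (VA.mode b 0 v) (VA.pow v k))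
    rw [smul_sub] at t2
    have hsum := Submodule.add_mem _ t1 t2
    have hgoal : VA.mode b 0 (VA.pow v (k + 1 + 1))
        - (((k + 1 : ℕ) : ℂ) + 1) • VA.mode (VA.mode b 0 v) (-1) (VA.pow v (k + 1))
        = (VA.mode v (-1) (VA.mode b 0 (VA.pow v (k + 1)))
            - ((k : ℂ) + 1) • VA.mode v (-1) (VA.mode (VA.mode b 0 v) (-1) (VA.pow v k)))
          + ((((k : ℂ) + 1)) • VA.mode v (-1) (VA.mode (VA.mode b 0 v) (-1) (VA.pow v k))
            - (((k : ℂ) + 1)) • VA.mode (VA.mode b 0 v) (-1) (VA.mode v (-1) (VA.pow v k))) := by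
      rw [show k + 1 + 1 = k + 2 from rfl, hco, ← VA.pow_succ' v k]
      push_cast
      module
    rw [hgoal]
    exact hsum

/-- `v₀ (v^k) ∈ C₂`. -/
lemma mode_zero_pow_mem (v : V) : ∀ k : ℕ, VA.mode v 0 (VA.pow v k) ∈ VA.C2 := by
  intro k
  induction k with
  | zero =>
    rw [VA.pow_zero', VA.creation_nonneg v 0 le_rfl]
    exact Submodule.zero_mem _
  | succ k ih =>
    have hco : VA.mode v 0 (VA.mode v (-1) (VA.pow v k))
        = VA.mode (VA.mode v 0 v) (-1) (VA.pow v k)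
          + VA.mode v (-1) (VA.mode v 0 (VA.pow v k)) := by
      rw [VA.comm0 v v (VA.pow v k) (-1)]
      abel
    rw [VA.pow_succ', hco]
    have h1 : VA.mode (VA.mode v 0 v) (-1) (VA.pow v k) ∈ VA.C2 :=
      VA.C2_mode_left_mem _ (-1) (by omega) (VA.self0_mem v)
    have h2 : VA.mode v (-1) (VA.mode v 0 (VA.pow v k)) ∈ VA.C2 :=
      VA.mode_C2_mem v ih (-1) (Or.inr rfl)
    exact Submodule.add_mem _ h1 h2

lemma word_nil (v : V) : VA.word v [] = v := rfl

lemma word_cons (v : V) (n : ℤ) (ns : List ℤ) :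
    VA.word v (n :: ns) = VA.mode v n (VA.word v ns) := rfl

lemma word_all_neg_one (v : V) (ns : List ℤ) (h : ∀ n ∈ ns, n = -1) :
    VA.word v ns = VA.pow v (ns.length + 1) := by
  induction ns with
  | nil =>
    simp only [List.length_nil, zero_add]
    rw [VA.word_nil, VA.pow_succ', VA.pow_zero', VA.creation]
  | cons n ns ih =>
    rw [VA.word_cons, ih (fun m hm => h m (List.mem_cons_of_mem _ hm)),
      h n List.mem_cons_self, List.length_cons]
    exact (VA.pow_succ' v (ns.length + 1)).symm

lemma word_with_zero_mem (v : V) (ns : List ℤ) (hgood : GoodIdx ns) (h0 : (0 : ℤ) ∈ ns) :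
    VA.word v ns ∈ VA.C2 := by
  induction ns with
  | nil => simp at h0
  | cons n ns ih =>
    rw [VA.word_cons]
    by_cases hz : (0 : ℤ) ∈ ns
    · exact VA.mode_C2_mem v (ih (fun m hm => hgood m (List.mem_cons_of_mem _ hm)) hz) n
        (hgood n List.mem_cons_self)
    · have hn : n = 0 := by
        rcases List.mem_cons.mp h0 with h | h
        · exact h.symm
        · exact absurd h hz
      have hall : ∀ m ∈ ns, m = -1 := by
        intro m hm
        rcases hgood m (List.mem_cons_of_mem _ hm) with h | h
        · exact absurd (h ▸ hm) hz
        · exact h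
      rw [hn, VA.word_all_neg_one v ns hall]
      exact VA.mode_zero_pow_mem v _

end VertexAlgebra
/-- Let `M ⊇ C₂(V)` be a subspace such that `M/C₂(V)` is an ideal of the
commutative algebra `V/C₂(V)` (expressed via representatives: `M` is closed under the
(-1)-th product by arbitrary elements of `V`). Then `M` is a MZ_{0,-1}-subspace of `V`. -/
theorem stmt14 {V : Type} [AddCommGroup V] [Module ℂ V] (VA : VertexAlgebra V)
    (M : Submodule ℂ V) (hC2 : VA.C2 ≤ M)
    (hideal : ∀ b w : V, w ∈ M → VA.mode b (-1) w ∈ M) :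
    VA.IsMZ (M : Set V) := by
  have hM : ∀ x y : V, x - y ∈ VA.C2 → y ∈ M → x ∈ M := by
    intro x y hxy hy
    have := M.add_mem (hC2 hxy) hy
    simpa using this
  unfold VertexAlgebra.IsMZ VertexAlgebra.srad VertexAlgebra.rad VertexAlgebra.lsrad
    VertexAlgebra.rsrad
  apply Set.Subset.antisymm
  · rintro v ⟨m, hm⟩
    have hpow : ∀ t : ℕ, m ≤ t → VA.pow v (t + 1) ∈ M := by
      intro t ht
      have hg : GoodIdx (List.replicate t (-1 : ℤ)) := by
        intro n hn
        exact Or.inr (List.eq_of_mem_replicate hn)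
      have := hm (List.replicate t (-1)) hg (by simp [ht])
      rwa [VA.word_all_neg_one v _ (fun n hn => List.eq_of_mem_replicate hn),
        List.length_replicate] at this
    refine ⟨?_, ?_⟩
    · -- left strong radical
      intro b
      refine ⟨m + 1, ?_⟩
      intro ns s hgood hlen hs
      by_cases h0 : (0 : ℤ) ∈ ns
      · exact hC2 (VA.mode_C2_mem b (VA.word_with_zero_mem v ns hgood h0) s hs)
      · have hall : ∀ n ∈ ns, n = -1 := fun n hn =>
          (hgood n hn).resolve_left (fun hz => h0 (hz ▸ hn))
        rw [VA.word_all_neg_one v ns hall]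
        rcases hs with rfl | rfl
        · have hd := VA.deriv_pow b v ns.length
          have hmem : ((ns.length : ℂ) + 1) • VA.mode (VA.mode b 0 v) (-1)
              (VA.pow v ns.length) ∈ M := by
            apply M.smul_mem
            apply hideal
            have he : ns.length = (ns.length - 1) + 1 := by omega
            rw [he]
            exact hpow _ (by omega)
          exact hM _ _ hd hmem
        · exact hideal b _ (hpow ns.length (by omega))
    · -- right strong radical
      intro w
      refine ⟨m + 1, ?_⟩
      intro ns s hgood hlen hs
      by_cases h0 : (0 : ℤ) ∈ ns
      · exact hC2 (VA.C2_mode_left_mem w s (by rcases hs with rfl | rfl <;> omega)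
          (VA.word_with_zero_mem v ns hgood h0))
      · have hall : ∀ n ∈ ns, n = -1 := fun n hn =>
          (hgood n hn).resolve_left (fun hz => h0 (hz ▸ hn))
        rw [VA.word_all_neg_one v ns hall]
        rcases hs with rfl | rfl
        · have h1 := VA.anticomm0_mem (VA.pow v (ns.length + 1)) w
          have hd := VA.deriv_pow w v ns.length
          have hmem : ((ns.length : ℂ) + 1) • VA.mode (VA.mode w 0 v) (-1)
              (VA.pow v ns.length) ∈ M := by
            apply M.smul_mem
            apply hideal
            have he : ns.length = (ns.length - 1) + 1 := by omega
            rw [he]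
            exact hpow _ (by omega)
          have hw0 : VA.mode w 0 (VA.pow v (ns.length + 1)) ∈ M := hM _ _ hd hmem
          have hkey : VA.mode (VA.pow v (ns.length + 1)) 0 w
              - (-VA.mode w 0 (VA.pow v (ns.length + 1))) ∈ VA.C2 := by
            simpa [sub_neg_eq_add] using h1
          exact hM _ _ hkey (M.neg_mem hw0)
        · have h1 := VA.comm_neg1_mem (VA.pow v (ns.length + 1)) w
          exact hM _ _ h1 (hideal w _ (hpow ns.length (by omega)))
  · rintro v ⟨-, hr⟩
    obtain ⟨m, hm⟩ := hr VA.one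
    refine ⟨m, ?_⟩
    intro ns hgood hlen
    have := hm ns (-1) hgood hlen (Or.inr rfl)
    rwa [VA.creation] at this
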